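/- arXiv:0912.2161 — 2 statements merged into one kernel-verified Lean document; each statement's English description precedes it below -/
import Mathlib

section
/- Let μ = (μ_1 ≥ … ≥ μ_n > 0) be a partition of N and let a be a word of length N with letters in {1,2,3,…}. Write a = a_{[1]}a_{[2]}⋯a_{[n]}, where a_{[i]} is the i-th consecutive block of a of length μ_i, and set μ_{n+1} = 0 with a_{[n+1]} the empty word. For words u, v of the same length m, writing w = uv (a word of length 2m), define Inv_{(m,m)}(u,v) = Σ_{k=1}^{m} Σ_{i=k+1}^{k+m−1} χ(w_k < w_i), where χ(true)=1 and χ(false)=0; for m ≥ m' and v of length m', define Inv_{(m,m')}(u,v) = Inv_{(m,m)}(u, 1^{m−m'}v), where 1^{m−m'}v is v prefixed by m−m' letters 1. Then |Inv_μ(a)| = Σ_{i=1}^{n} Inv_{(μ_i,μ_{i+1})}(a_{[i]}, a_{[i+1]}). -/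
/-!
STATEMENT 0: For a partition μ of N and a word a of length N, the inversion
statistic |Inv_μ(a)| of the tabloid of shape μ with reading word a equals
Σ_{i=1}^{n} Inv_{(μ_i,μ_{i+1})}(a_{[i]}, a_{[i+1]}).
-/

/-- `i`-th part of `μ` (1-based); `0` if `i` is out of range. -/
def KMpart (μ : List ℕ) (i : ℕ) : ℕ := μ.getD (i - 1) 0

/-- Sum of the first `i` parts of `μ`. -/
def KMpsum (μ : List ℕ) (i : ℕ) : ℕ := (μ.take i).sum

/-- Entry `t_{i,j}` (1-based) of the tabloid of shape `μ` with reading word `a`: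
the `i`-th consecutive block of `a` of length `μ_i` fills row `i` from right to left. -/
def KMentry (μ a : List ℕ) (i j : ℕ) : ℕ := a.getD (KMpsum μ (i - 1) + KMpart μ i - j) 0

/-- The set of cells `(i,j)` (1-based) of the Young diagram of `μ`. -/
def KMcells (μ : List ℕ) : Finset (ℕ × ℕ) :=
  (Finset.Icc 1 μ.length ×ˢ Finset.Icc 1 μ.sum).filter (fun c => c.2 ≤ KMpart μ c.1)

/-- `|Inv_μ(a)|`: the number of pairs of a cell `(i,j)` together with a cell `(k,l)`
in its attacking region (i.e. `(i,k)` with `k < j` or `(i+1,k)` with `k > j`)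
such that `t_{k,l} > t_{i,j}`. -/
def KMInvNum (μ a : List ℕ) : ℕ :=
  ((KMcells μ ×ˢ KMcells μ).filter (fun cd =>
    ((cd.2.1 = cd.1.1 ∧ cd.2.2 < cd.1.2) ∨ (cd.2.1 = cd.1.1 + 1 ∧ cd.1.2 < cd.2.2)) ∧
      KMentry μ a cd.1.1 cd.1.2 < KMentry μ a cd.2.1 cd.2.2)).card

/-- The `i`-th consecutive block `a_{[i]}` of `a` of length `μ_i`. -/
def KMblock (μ a : List ℕ) (i : ℕ) : List ℕ := (a.drop (KMpsum μ (i - 1))).take (KMpart μ i)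

/-- `Inv_{(m,m)}(u,v)` for words `u`, `v` of the same length `m`:
with `w = uv`, it is `Σ_{k=1}^{m} Σ_{i=k+1}^{k+m-1} χ(w_k < w_i)`. -/
def KMInvEq (u v : List ℕ) : ℕ :=
  ∑ k ∈ Finset.Icc 1 u.length, ∑ i ∈ Finset.Icc (k + 1) (k + u.length - 1),
    (if (u ++ v).getD (k - 1) 0 < (u ++ v).getD (i - 1) 0 then 1 else 0)

/-- `Inv_{(m,m')}(u,v)` for `u` of length `m` and `v` of length `m' ≤ m`:
`Inv_{(m,m)}(u, 1^{m-m'} v)`. -/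
def KMInvPair (u v : List ℕ) : ℕ :=
  KMInvEq u (List.replicate (u.length - v.length) 1 ++ v)

lemma psum_le_sum (μ : List ℕ) (i : ℕ) : KMpsum μ i ≤ μ.sum := by
  conv_rhs => rw [← List.take_append_drop i μ]
  rw [List.sum_append]; exact Nat.le_add_right _ _

lemma psum_succ (μ : List ℕ) (i : ℕ) (hi : i < μ.length) :
    KMpsum μ (i + 1) = KMpsum μ i + KMpart μ (i + 1) := by
  unfold KMpsum KMpart
  rw [List.take_succ, List.sum_append]
  simp [List.getElem?_eq_getElem hi, List.getD_eq_getElem?_getD, Nat.add_sub_cancel]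

lemma part_eq_zero (μ : List ℕ) (i : ℕ) (hi : μ.length < i) : KMpart μ i = 0 := by
  unfold KMpart
  rw [List.getD_eq_getElem?_getD, List.getElem?_eq_none (by omega)]; rfl

lemma psum_part_le (μ : List ℕ) (i : ℕ) (h1 : 1 ≤ i) :
    KMpsum μ (i - 1) + KMpart μ i ≤ μ.sum := by
  rcases le_or_gt i μ.length with h | h
  · have := psum_succ μ (i - 1) (by omega)
    rw [show i - 1 + 1 = i by omega] at this
    rw [← this]; exact psum_le_sum μ i
  · rw [part_eq_zero μ i h]; simpa using psum_le_sum μ (i - 1)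

lemma psum_succ' (μ : List ℕ) (i : ℕ) (h1 : 1 ≤ i) (hi : i ≤ μ.length) :
    KMpsum μ (i - 1) + KMpart μ i = KMpsum μ i := by
  have := psum_succ μ (i - 1) (by omega)
  rw [show i - 1 + 1 = i by omega] at this
  omega

lemma block_length (μ a : List ℕ) (i : ℕ) (h1 : 1 ≤ i) (hlen : a.length = μ.sum) :
    (KMblock μ a i).length = KMpart μ i := by
  unfold KMblock
  rw [List.length_take, List.length_drop, hlen]
  have := psum_part_le μ i h1
  omega

lemma block_getD (μ a : List ℕ) (i j : ℕ) (hj : j < KMpart μ i) :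
    (KMblock μ a i).getD j 0 = a.getD (KMpsum μ (i - 1) + j) 0 := by
  unfold KMblock
  simp only [List.getD_eq_getElem?_getD, List.getElem?_take, hj, if_pos, List.getElem?_drop]

lemma part_antitone (μ : List ℕ) (hsort : List.Pairwise (· ≥ ·) μ) (i : ℕ) (h1 : 1 ≤ i) :
    KMpart μ (i + 1) ≤ KMpart μ i := by
  rcases le_or_gt μ.length i with h | h
  · rw [part_eq_zero μ (i + 1) (by omega)]; exact Nat.zero_le _
  · unfold KMpart
    rw [List.getD_eq_getElem?_getD, List.getD_eq_getElem?_getD,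
      List.getElem?_eq_getElem (by omega : i + 1 - 1 < μ.length),
      List.getElem?_eq_getElem (by omega : i - 1 < μ.length)]
    simp only [Option.getD_some]
    exact (List.pairwise_iff_getElem.mp hsort) _ _ _ _ (by omega)

lemma part_le_sum (μ : List ℕ) (i : ℕ) (h1 : 1 ≤ i) : KMpart μ i ≤ μ.sum := by
  have := psum_part_le μ i h1; omega

lemma part_pos (μ : List ℕ) (hpos : ∀ x ∈ μ, 0 < x) (i : ℕ) (h1 : 1 ≤ i)
    (hi : i ≤ μ.length) : 0 < KMpart μ i := by
  unfold KMpart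
  rw [List.getD_eq_getElem?_getD, List.getElem?_eq_getElem (by omega : i - 1 < μ.length)]
  exact hpos _ (List.getElem_mem _)

lemma E1 (μ a : List ℕ) (i : ℕ) (hlen : a.length = μ.sum) (h1 : 1 ≤ i)
    (k : ℕ) (hk1 : 1 ≤ k) (hk2 : k ≤ KMpart μ i) :
    (KMblock μ a i ++ (List.replicate (KMpart μ i - KMpart μ (i+1)) 1 ++
      KMblock μ a (i+1))).getD (k - 1) 0 = KMentry μ a i (KMpart μ i + 1 - k) := by
  rw [List.getD_append _ _ _ _ (by rw [block_length μ a i h1 hlen]; omega),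
    block_getD μ a i (k-1) (by omega)]
  unfold KMentry
  congr 1
  omega

lemma E2 (μ a : List ℕ) (i : ℕ) (hlen : a.length = μ.sum) (h1 : 1 ≤ i)
    (hletters : ∀ x ∈ a, 0 < x)
    (k : ℕ) (hk1 : 1 ≤ k) (hk2 : k ≤ KMpart μ i) :
    0 < (KMblock μ a i ++ (List.replicate (KMpart μ i - KMpart μ (i+1)) 1 ++
      KMblock μ a (i+1))).getD (k - 1) 0 := by
  rw [List.getD_append _ _ _ _ (by rw [block_length μ a i h1 hlen]; omega),
    block_getD μ a i (k-1) (by omega)]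
  have hidx : KMpsum μ (i-1) + (k-1) < a.length := by
    have := psum_part_le μ i h1; omega
  rw [List.getD_eq_getElem _ _ hidx]
  exact hletters _ (List.getElem_mem _)

lemma E3 (μ a : List ℕ) (i : ℕ) (hlen : a.length = μ.sum) (h1 : 1 ≤ i)
    (j : ℕ) (hj1 : KMpart μ i + 1 ≤ j) (hj2 : j - 1 - KMpart μ i < KMpart μ i - KMpart μ (i+1)) :
    (KMblock μ a i ++ (List.replicate (KMpart μ i - KMpart μ (i+1)) 1 ++
      KMblock μ a (i+1))).getD (j - 1) 0 = 1 := by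
  rw [List.getD_append_right _ _ _ _ (by rw [block_length μ a i h1 hlen]; omega),
    block_length μ a i h1 hlen,
    List.getD_append _ _ _ _ (by rw [List.length_replicate]; omega),
    List.getD_eq_getElem _ _ (by rw [List.length_replicate]; omega),
    List.getElem_replicate]

lemma E4 (μ a : List ℕ) (i : ℕ) (hlen : a.length = μ.sum) (h1 : 1 ≤ i)
    (hmm : KMpart μ (i+1) ≤ KMpart μ i)
    (j : ℕ) (hj1 : 2 * KMpart μ i - KMpart μ (i+1) + 1 ≤ j) (hj2 : j ≤ 2 * KMpart μ i) :
    (KMblock μ a i ++ (List.replicate (KMpart μ i - KMpart μ (i+1)) 1 ++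
      KMblock μ a (i+1))).getD (j - 1) 0 = KMentry μ a (i+1) (2 * KMpart μ i + 1 - j) := by
  rw [List.getD_append_right _ _ _ _ (by rw [block_length μ a i h1 hlen]; omega),
    block_length μ a i h1 hlen,
    List.getD_append_right _ _ _ _ (by rw [List.length_replicate]; omega),
    List.length_replicate,
    block_getD μ a (i+1) _ (by omega)]
  unfold KMentry
  congr 1
  simp only [Nat.add_sub_cancel]
  rcases le_or_gt i μ.length with h | h
  · rw [← psum_succ' μ i h1 h]; omega
  · have : KMpart μ (i+1) = 0 := part_eq_zero μ (i+1) (by omega)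
    omega

lemma invEq_card (u v : List ℕ) :
    KMInvEq u v = (((Finset.Icc 1 u.length).sigma fun k =>
      Finset.Icc (k + 1) (k + u.length - 1)).filter
      (fun p => (u ++ v).getD (p.1 - 1) 0 < (u ++ v).getD (p.2 - 1) 0)).card := by
  rw [Finset.card_filter, Finset.sum_sigma]
  rfl
lemma row_card (μ : List ℕ) (hsort : List.Pairwise (· ≥ ·) μ) (hpos : ∀ x ∈ μ, 0 < x)
    (a : List ℕ) (hlen : a.length = μ.sum) (hletters : ∀ x ∈ a, 0 < x)
    (i : ℕ) (h1 : 1 ≤ i) (hin : i ≤ μ.length) :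
    (((KMcells μ ×ˢ KMcells μ).filter (fun cd =>
      ((cd.2.1 = cd.1.1 ∧ cd.2.2 < cd.1.2) ∨ (cd.2.1 = cd.1.1 + 1 ∧ cd.1.2 < cd.2.2)) ∧
        KMentry μ a cd.1.1 cd.1.2 < KMentry μ a cd.2.1 cd.2.2)).filter
      (fun cd => cd.1.1 = i)).card
    = KMInvPair (KMblock μ a i) (KMblock μ a (i + 1)) := by
  have hu := block_length μ a i h1 hlen
  have hv := block_length μ a (i+1) (by omega) hlen
  have hmm : KMpart μ (i+1) ≤ KMpart μ i := part_antitone μ hsort i h1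
  have hm0 : 0 < KMpart μ i := part_pos μ hpos i h1 hin
  have hms : KMpart μ i ≤ μ.sum := part_le_sum μ i h1
  have hms' : KMpart μ (i+1) ≤ μ.sum := part_le_sum μ (i+1) (by omega)
  rw [KMInvPair, invEq_card, hu, hv]
  refine Finset.card_nbij'
    (fun cd => ⟨KMpart μ i + 1 - cd.1.2,
      if cd.2.1 = i then KMpart μ i + 1 - cd.2.2 else 2 * KMpart μ i + 1 - cd.2.2⟩)
    (fun p => ((i, KMpart μ i + 1 - p.1),
      if p.2 ≤ KMpart μ i then (i, KMpart μ i + 1 - p.2)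
      else (i + 1, 2 * KMpart μ i + 1 - p.2))) ?_ ?_ ?_ ?_
  · -- forward maps into R
    rintro ⟨⟨i1, j⟩, ⟨k', l⟩⟩ hmem
    simp only [Finset.mem_coe, Finset.mem_filter, Finset.mem_product, KMcells, Finset.mem_Icc] at hmem
    obtain ⟨⟨⟨⟨⟨⟨hi1a, hi1b⟩, hja, hjb⟩, hjle⟩, ⟨⟨⟨hka, hkb⟩, hla, hlb⟩, hlle⟩⟩, hcond, hent⟩, hrow⟩ := hmem
    simp only at hjle hlle hent hcond hrow ⊢
    rw [hrow] at hjle hent hcond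
    rcases hcond with ⟨hkeq, hlt⟩ | ⟨hkeq, hlt⟩
    · rw [hkeq] at hent hlle
      rw [if_pos hkeq]
      simp only [Finset.mem_coe, Finset.mem_filter, Finset.mem_sigma, Finset.mem_Icc]
      refine ⟨⟨⟨by omega, by omega⟩, by omega, by omega⟩, ?_⟩
      rw [E1 μ a i hlen h1 _ (by omega) (by omega),
        E1 μ a i hlen h1 _ (by omega) (by omega),
        show KMpart μ i + 1 - (KMpart μ i + 1 - j) = j by omega,
        show KMpart μ i + 1 - (KMpart μ i + 1 - l) = l by omega]
      exact hent
    · rw [hkeq] at hent hlle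
      rw [if_neg (by omega : ¬ k' = i)]
      simp only [Finset.mem_coe, Finset.mem_filter, Finset.mem_sigma, Finset.mem_Icc]
      refine ⟨⟨⟨by omega, by omega⟩, by omega, by omega⟩, ?_⟩
      rw [E1 μ a i hlen h1 _ (by omega) (by omega),
        E4 μ a i hlen h1 hmm _ (by omega) (by omega),
        show KMpart μ i + 1 - (KMpart μ i + 1 - j) = j by omega,
        show 2 * KMpart μ i + 1 - (2 * KMpart μ i + 1 - l) = l by omega]
      exact hent
  · -- backward maps into S
    rintro ⟨k, j'⟩ hmem
    simp only [Finset.mem_coe, Finset.mem_filter, Finset.mem_sigma, Finset.mem_Icc] at hmem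
    obtain ⟨⟨⟨hk1, hk2⟩, hj1, hj2⟩, hent⟩ := hmem
    rcases le_or_gt j' (KMpart μ i) with hcase | hcase
    · dsimp only
      rw [if_pos hcase]
      simp only [Finset.mem_coe, Finset.mem_filter, Finset.mem_product, KMcells, Finset.mem_Icc]
      refine ⟨⟨⟨⟨⟨⟨h1, hin⟩, by omega, by omega⟩, by omega⟩,
        ⟨⟨⟨h1, hin⟩, by omega, by omega⟩, by omega⟩⟩, Or.inl ⟨by trivial, by omega⟩, ?_⟩, by trivial⟩
      rw [E1 μ a i hlen h1 k hk1 hk2, E1 μ a i hlen h1 j' (by omega) hcase] at hent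
      exact hent
    · have hjle : j' ≤ 2 * KMpart μ i := by omega
      have hpad : 2 * KMpart μ i - KMpart μ (i+1) + 1 ≤ j' := by
        by_contra hcon
        rw [E3 μ a i hlen h1 j' (by omega) (by omega)] at hent
        have := E2 μ a i hlen h1 hletters k hk1 hk2
        omega
      have hm'1 : 0 < KMpart μ (i+1) := by omega
      have hin' : i + 1 ≤ μ.length := by
        by_contra hcon
        rw [part_eq_zero μ (i+1) (by omega)] at hm'1
        omega
      dsimp only
      rw [if_neg (by omega : ¬ j' ≤ KMpart μ i)]
      simp only [Finset.mem_coe, Finset.mem_filter, Finset.mem_product, KMcells, Finset.mem_Icc]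
      refine ⟨⟨⟨⟨⟨⟨h1, hin⟩, by omega, by omega⟩, by omega⟩,
        ⟨⟨⟨by omega, hin'⟩, by omega, by omega⟩, by omega⟩⟩, Or.inr ⟨by trivial, by omega⟩, ?_⟩, by trivial⟩
      rw [E1 μ a i hlen h1 k hk1 hk2, E4 μ a i hlen h1 hmm j' hpad hjle] at hent
      exact hent
  · -- left inverse
    rintro ⟨⟨i1, j⟩, ⟨k', l⟩⟩ hmem
    simp only [Finset.mem_coe, Finset.mem_filter, Finset.mem_product, KMcells, Finset.mem_Icc] at hmem
    obtain ⟨⟨⟨⟨⟨⟨hi1a, hi1b⟩, hja, hjb⟩, hjle⟩, ⟨⟨⟨hka, hkb⟩, hla, hlb⟩, hlle⟩⟩, hcond, hent⟩, hrow⟩ := hmem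
    rw [hrow] at hjle hcond
    rcases hcond with ⟨hkeq, hlt⟩ | ⟨hkeq, hlt⟩
    · rw [hkeq] at hlle
      dsimp only
      rw [if_pos hkeq]
      rw [if_pos (by omega : KMpart μ i + 1 - l ≤ KMpart μ i)]
      simp only [Prod.mk.injEq]
      exact ⟨⟨hrow.symm, by omega⟩, hkeq.symm, by omega⟩
    · rw [hkeq] at hlle
      dsimp only
      rw [if_neg (by omega : ¬ k' = i)]
      rw [if_neg (by omega : ¬ 2 * KMpart μ i + 1 - l ≤ KMpart μ i)]
      simp only [Prod.mk.injEq]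
      exact ⟨⟨hrow.symm, by omega⟩, hkeq.symm, by omega⟩
  · -- right inverse
    rintro ⟨k, j'⟩ hmem
    simp only [Finset.mem_coe, Finset.mem_filter, Finset.mem_sigma, Finset.mem_Icc] at hmem
    obtain ⟨⟨⟨hk1, hk2⟩, hj1, hj2⟩, hent⟩ := hmem
    rcases le_or_gt j' (KMpart μ i) with hcase | hcase
    · dsimp only
      rw [if_pos hcase]
      rw [if_pos (rfl : i = i)]
      rw [show KMpart μ i + 1 - (KMpart μ i + 1 - k) = k by omega,
        show KMpart μ i + 1 - (KMpart μ i + 1 - j') = j' by omega]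
    · dsimp only
      rw [if_neg (by omega : ¬ j' ≤ KMpart μ i)]
      rw [if_neg (by omega : ¬ i + 1 = i)]
      rw [show KMpart μ i + 1 - (KMpart μ i + 1 - k) = k by omega,
        show 2 * KMpart μ i + 1 - (2 * KMpart μ i + 1 - j') = j' by omega]
theorem inv_eq_sum_of_row_pairs
    (μ : List ℕ) (hsort : List.Pairwise (· ≥ ·) μ) (hpos : ∀ x ∈ μ, 0 < x)
    (a : List ℕ) (hlen : a.length = μ.sum) (hletters : ∀ x ∈ a, 0 < x) :
    KMInvNum μ a =
      ∑ i ∈ Finset.Icc 1 μ.length, KMInvPair (KMblock μ a i) (KMblock μ a (i + 1)) := by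
  unfold KMInvNum
  rw [Finset.card_eq_sum_card_fiberwise (f := fun cd => cd.1.1) (t := Finset.Icc 1 μ.length)
    (fun cd hcd => by
      simp only [Finset.mem_coe, Finset.mem_filter, Finset.mem_product, KMcells, Finset.mem_Icc] at hcd
      exact Finset.mem_Icc.mpr hcd.1.1.1.1)]
  refine Finset.sum_congr rfl fun i hi => ?_
  rw [Finset.mem_Icc] at hi
  exact row_card μ hsort hpos a hlen hletters i hi.1 hi.2
end

section
/- Let a = a_1a_2⋯a_L be a word of length L with letters in {1,…,n+1} and let â be the box-ball state obtained from a by appending infinitely many letters 1. Then τ(a) equals the total number of balls contained in the first L boxes during the first L time steps of the box-ball evolution: τ(a) = Σ_{k=0}^{L−1} #{ i : 1 ≤ i ≤ L and (T^k(â))_i ≥ 2 }. -/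
/-!
STATEMENT 6: For a word a of length L with letters in {1,…,n+1}, letting â be the
box-ball state obtained by appending infinitely many 1's, the statistic
τ(a) = L·χ(a_1 ≥ 2) + Σ_{i=1}^{L−1} (L−i)·χ(a_i < a_{i+1})
equals the total number of balls contained in the first L boxes during the first
L time steps of the box-ball evolution T.
-/

open scoped Classical

/-- One elementary move of the box-ball algorithm for balls with label `j`:
given a state `s : ℕ → ℕ` (positions `0,1,2,…`; `1` = empty box, `j ≥ 2` = ball
labeled `j`) together with the set of positions of already-moved balls, take the
leftmost not-yet-moved ball with label `j` and move it to the nearest empty box to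
its right (marking its new position as moved). If there is no such ball or no such
empty box, do nothing. -/
noncomputable def bbsMoveBall (j : ℕ) (sm : (ℕ → ℕ) × Set ℕ) : (ℕ → ℕ) × Set ℕ :=
  if h : (∃ i, sm.1 i = j ∧ i ∉ sm.2) ∧
      ∃ i', sm.1 i' = 1 ∧ sInf {i | sm.1 i = j ∧ i ∉ sm.2} < i' then
    let p := sInf {i | sm.1 i = j ∧ i ∉ sm.2}
    let q := sInf {i | sm.1 i = 1 ∧ p < i}
    (Function.update (Function.update sm.1 p 1) q j, insert q sm.2)
  else sm

/-- The phase of the box-ball time evolution moving all not-yet-moved balls of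
label `j`, one at a time, each to the nearest empty box to its right. -/
noncomputable def bbsPhase (j : ℕ) (sm : (ℕ → ℕ) × Set ℕ) : (ℕ → ℕ) × Set ℕ :=
  (bbsMoveBall j)^[{i | sm.1 i = j ∧ i ∉ sm.2}.ncard] sm

/-- The box-ball time evolution `T`: starting with no ball moved, for each label
`j = n+1, n, …, 2` in decreasing order move all balls with label `j`, one at a
time, each to the nearest empty box to its right; every ball is moved exactly once. -/
noncomputable def bbsT (n : ℕ) (s : ℕ → ℕ) : ℕ → ℕ :=
  ((List.range n).foldl (fun sm k => bbsPhase (n + 1 - k) sm) (s, (∅ : Set ℕ))).1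

/-- `τ(a) = L·χ(a_1 ≥ 2) + Σ_{i=1}^{L−1} (L−i)·χ(a_i < a_{i+1})` for a word `a` of
length `L`. -/
def bbsTau (a : List ℕ) : ℕ :=
  a.length * (if 2 ≤ a.headD 0 then 1 else 0) +
    ∑ i ∈ Finset.Icc 1 (a.length - 1),
      (a.length - i) * (if a.getD (i - 1) 0 < a.getD i 0 then 1 else 0)





namespace BBSaux

/-- Counter of the single-label pass. -/
noncomputable def cntM (j : ℕ) (s : ℕ → ℕ) (M : Set ℕ) : ℕ → ℕ
  | 0 => 0
  | i+1 => if s i = j ∧ i ∉ M then cntM j s M i + 1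
    else if s i = 1 ∧ 0 < cntM j s M i then cntM j s M i - 1
    else cntM j s M i

/-- Output of the single-label pass. -/
noncomputable def passM (j : ℕ) (s : ℕ → ℕ) (M : Set ℕ) (i : ℕ) : ℕ :=
  if s i = j ∧ i ∉ M then 1
  else if s i = 1 ∧ 0 < cntM j s M i then j
  else s i

/-- Positions where a ball is dropped during the pass. -/
def dropsM (j : ℕ) (s : ℕ → ℕ) (M : Set ℕ) : Set ℕ :=
  {i | s i = 1 ∧ 0 < cntM j s M i}

lemma cntM_zero (j s M) : cntM j s M 0 = 0 := rfl

lemma cntM_succ (j s M i) : cntM j s M (i+1) =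
    if s i = j ∧ i ∉ M then cntM j s M i + 1
    else if s i = 1 ∧ 0 < cntM j s M i then cntM j s M i - 1
    else cntM j s M i := rfl

lemma cntM_eq_zero (j s M) {p : ℕ} (h : ∀ k, k < p → ¬(s k = j ∧ k ∉ M)) :
    ∀ i, i ≤ p → cntM j s M i = 0 := by
  intro i hi
  induction i with
  | zero => rfl
  | succ i ih =>
    have h0 : cntM j s M i = 0 := ih (le_of_lt (Nat.lt_of_succ_le hi))
    rw [cntM_succ, if_neg (h i (Nat.lt_of_succ_le hi)), if_neg (by simp [h0]), h0]

lemma cntM_congr {j s M} (h : ∀ i ∈ M, s i ≠ j) : ∀ i, cntM j s M i = cntM j s (∅ : Set ℕ) i := by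
  intro i
  induction i with
  | zero => rfl
  | succ i ih =>
    have hc : (s i = j ∧ i ∉ M) ↔ (s i = j ∧ i ∉ (∅ : Set ℕ)) := by
      constructor
      · rintro ⟨h1, _⟩; exact ⟨h1, by simp⟩
      · rintro ⟨h1, _⟩; exact ⟨h1, fun hm => h i hm h1⟩
    rw [cntM_succ, cntM_succ, ih]
    by_cases h1 : s i = j ∧ i ∉ (∅ : Set ℕ)
    · rw [if_pos (hc.mpr h1), if_pos h1]
    · rw [if_neg (fun hh => h1 (hc.mp hh)), if_neg h1]

lemma passM_congr {j s M} (h : ∀ i ∈ M, s i ≠ j) : passM j s M = passM j s (∅ : Set ℕ) := by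
  funext i
  unfold passM
  rw [cntM_congr h]
  by_cases h1 : s i = j
  · rw [if_pos ⟨h1, fun hm => h i hm h1⟩, if_pos ⟨h1, by simp⟩]
  · rw [if_neg (show ¬(s i = j ∧ i ∉ M) from fun hh => h1 hh.1),
      if_neg (show ¬(s i = j ∧ i ∉ (∅ : Set ℕ)) from fun hh => h1 hh.1)]

/-- The counter hits zero beyond all the balls and stays there. -/
lemma cntM_le (j s M) {N : ℕ} (hN : ∀ i, N ≤ i → s i = 1) (hj : 2 ≤ j) :
    ∀ t, cntM j s M (N + t) ≤ cntM j s M N - t := by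
  intro t
  induction t with
  | zero => simp
  | succ t ih =>
    have hs : s (N + t) = 1 := hN _ (by omega)
    rw [show N + (t+1) = (N+t)+1 by omega, cntM_succ, if_neg (by rw [hs]; intro h; omega)]
    by_cases hc : 0 < cntM j s M (N + t)
    · rw [if_pos ⟨hs, hc⟩]; omega
    · rw [if_neg (by tauto)]; omega

lemma dropsM_finite (j s M) (hfin : {i | s i ≠ 1}.Finite) (hj : 2 ≤ j) :
    (dropsM j s M).Finite := by
  obtain ⟨N, hN⟩ : ∃ N, ∀ i, N ≤ i → s i = 1 := by
    rcases hfin.bddAbove with ⟨N, hN⟩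
    exact ⟨N+1, fun i hi => by
      by_contra h
      exact absurd (hN (Set.mem_setOf_eq ▸ h : i ∈ {i | s i ≠ 1})) (by omega)⟩
  apply Set.Finite.subset (Set.finite_Iio (N + cntM j s M N))
  intro i hi
  rcases hi with ⟨hs1, hc⟩
  simp only [Set.mem_Iio]
  by_contra h
  push_neg at h
  have := cntM_le j s M hN hj (i - N)
  rw [show N + (i - N) = i by omega] at this
  omega

lemma passM_ne_one_subset (j s M) :
    {i | passM j s M i ≠ 1} ⊆ {i | s i ≠ 1} ∪ dropsM j s M := by
  intro i hi
  simp only [Set.mem_setOf_eq] at hi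
  unfold passM at hi
  by_cases h1 : s i = j ∧ i ∉ M
  · rw [if_pos h1] at hi; exact absurd rfl hi
  · rw [if_neg h1] at hi
    by_cases h2 : s i = 1 ∧ 0 < cntM j s M i
    · exact Or.inr h2
    · rw [if_neg h2] at hi; exact Or.inl hi

end BBSaux

namespace BBSaux

lemma bbsMoveBall_eq {j : ℕ} {s : ℕ → ℕ} {M : Set ℕ}
    (h1 : ∃ i, s i = j ∧ i ∉ M)
    (h2 : ∃ i', s i' = 1 ∧ sInf {i | s i = j ∧ i ∉ M} < i') :
    bbsMoveBall j (s, M) =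
      (Function.update (Function.update s (sInf {i | s i = j ∧ i ∉ M}) 1)
        (sInf {i | s i = 1 ∧ sInf {i | s i = j ∧ i ∉ M} < i}) j,
       insert (sInf {i | s i = 1 ∧ sInf {i | s i = j ∧ i ∉ M} < i}) M) := by
  unfold bbsMoveBall
  rw [dif_pos ⟨h1, h2⟩]

lemma phase_aux (j : ℕ) (hj : 2 ≤ j) :
    ∀ (N : ℕ) (s : ℕ → ℕ) (M : Set ℕ), {i | s i ≠ 1}.Finite →
      {i | s i = j ∧ i ∉ M}.ncard = N →
      (bbsMoveBall j)^[N] (s, M) = (passM j s M, M ∪ dropsM j s M) := by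
  intro N
  induction N with
  | zero =>
    intro s M hfin hcard
    have hUfin : {i | s i = j ∧ i ∉ M}.Finite :=
      hfin.subset (fun i hi => by simp only [Set.mem_setOf_eq] at hi ⊢; omega)
    have hU : {i | s i = j ∧ i ∉ M} = ∅ := (Set.ncard_eq_zero hUfin).mp hcard
    have hno : ∀ k, ¬(s k = j ∧ k ∉ M) := by
      intro k hk
      exact absurd (hU ▸ hk : k ∈ (∅ : Set ℕ)) (Set.notMem_empty k)
    have hc0 : ∀ i, cntM j s M i = 0 := fun i =>
      cntM_eq_zero j s M (p := i) (fun k _ => hno k) i le_rfl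
    have hpass : passM j s M = s := by
      funext i
      unfold passM
      rw [if_neg (hno i), if_neg (by simp [hc0 i])]
    have hdrop : dropsM j s M = ∅ := by
      ext i
      simp [dropsM, hc0 i]
    simp [hpass, hdrop]
  | succ N ih =>
    intro s M hfin hcard
    have hUfin : {i | s i = j ∧ i ∉ M}.Finite :=
      hfin.subset (fun i hi => by simp only [Set.mem_setOf_eq] at hi ⊢; omega)
    have hUne : {i | s i = j ∧ i ∉ M}.Nonempty := by
      rw [Set.nonempty_iff_ne_empty]
      intro h
      rw [h, Set.ncard_empty] at hcard
      omega
    set p := sInf {i | s i = j ∧ i ∉ M} with hpdef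
    have hp : p ∈ {i | s i = j ∧ i ∉ M} := Nat.sInf_mem hUne
    have hp1 : s p = j := hp.1
    have hp2 : p ∉ M := hp.2
    have hpmin : ∀ k, k < p → ¬(s k = j ∧ k ∉ M) := by
      intro k hk hkU
      have h2 := Nat.sInf_le (show k ∈ {i | s i = j ∧ i ∉ M} from hkU)
      rw [← hpdef] at h2
      omega
    have hQne : {i | s i = 1 ∧ p < i}.Nonempty := by
      have : (({i | s i ≠ 1} ∪ Set.Iic p)ᶜ).Infinite :=
        Set.Finite.infinite_compl ((hfin.union (Set.finite_Iic p)))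
      obtain ⟨i, hi⟩ := this.nonempty
      simp only [Set.mem_compl_iff, Set.mem_union, Set.mem_setOf_eq, Set.mem_Iic,
        not_or, not_not, not_le] at hi
      exact ⟨i, hi.1, hi.2⟩
    set q := sInf {i | s i = 1 ∧ p < i} with hqdef
    have hq : q ∈ {i | s i = 1 ∧ p < i} := Nat.sInf_mem hQne
    have hq1 : s q = 1 := hq.1
    have hq2 : p < q := hq.2
    have hqmin : ∀ k, p < k → k < q → s k ≠ 1 := by
      intro k hk1 hk2 hk3
      have h2 := Nat.sInf_le (show k ∈ {i | s i = 1 ∧ p < i} from ⟨hk3, hk1⟩)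
      rw [← hqdef] at h2
      omega
    set s' := Function.update (Function.update s p 1) q j with hs'def
    set M' := insert q M with hM'def
    have hpq : p ≠ q := Nat.ne_of_lt hq2
    have hs'p : s' p = 1 := by
      rw [hs'def, Function.update_of_ne hpq, Function.update_self]
    have hs'q : s' q = j := by rw [hs'def, Function.update_self]
    have hs'other : ∀ k, k ≠ p → k ≠ q → s' k = s k := by
      intro k hk1 hk2
      rw [hs'def, Function.update_of_ne hk2, Function.update_of_ne hk1]
    have hmem' : ∀ k, k ≠ q → (k ∈ M' ↔ k ∈ M) := by
      intro k hk
      simp [hM'def, hk]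
    have hqM' : q ∈ M' := by simp [hM'def]
    -- condition equivalence away from p and q
    have hcnd_iff : ∀ k, k ≠ p → k ≠ q → ((s' k = j ∧ k ∉ M') ↔ (s k = j ∧ k ∉ M)) := by
      intro k hk1 hk2
      rw [hs'other k hk1 hk2]
      constructor
      · intro hh; exact ⟨hh.1, fun hm => hh.2 ((hmem' k hk2).mpr hm)⟩
      · intro hh; exact ⟨hh.1, fun hm => hh.2 ((hmem' k hk2).mp hm)⟩
    have hc0 : ∀ i, i ≤ p → cntM j s M i = 0 := cntM_eq_zero j s M hpmin
    -- the key counter comparison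
    have G : ∀ i, (cntM j s' M' i =
        if p < i ∧ i ≤ q then cntM j s M i - 1 else cntM j s M i) ∧
        (p < i → i ≤ q → 0 < cntM j s M i) := by
      intro i
      induction i with
      | zero =>
        constructor
        · rw [if_neg (by omega), cntM_zero, cntM_zero]
        · omega
      | succ i ihi =>
        obtain ⟨ih1, ih2⟩ := ihi
        rcases Nat.lt_trichotomy i p with hI | hI | hI
        · -- i < p
          have e1 : cntM j s M i = 0 := hc0 i (by omega)
          have e2 : cntM j s' M' i = 0 := by rw [ih1, if_neg (by omega), e1]
          have hA : cntM j s M (i+1) = 0 := hc0 (i+1) (by omega)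
          have hB : cntM j s' M' (i+1) = 0 := by
            rw [cntM_succ, if_neg (fun hh => hpmin i hI ((hcnd_iff i (by omega) (by omega)).mp hh)),
              if_neg (by rw [e2]; omega), e2]
          constructor
          · rw [hA, hB, if_neg (by omega)]
          · omega
        · -- i = p
          have e1 : cntM j s M i = 0 := hc0 i (by omega)
          have e2 : cntM j s' M' i = 0 := by rw [ih1, if_neg (by omega), e1]
          have hA : cntM j s M (i+1) = 1 := by
            rw [cntM_succ, if_pos (by rw [hI]; exact ⟨hp1, hp2⟩), e1]
          have hB : cntM j s' M' (i+1) = 0 := by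
            rw [cntM_succ, if_neg (by rw [hI, hs'p]; intro hh; omega),
              if_neg (by rw [e2]; omega), e2]
          constructor
          · rw [hA, hB, if_pos (by omega)]
          · intro _ _; omega
        · rcases Nat.lt_trichotomy i q with hJ | hJ | hJ
          · -- p < i < q
            have hne1 : s i ≠ 1 := hqmin i hI hJ
            have hss : s' i = s i := hs'other i (by omega) (by omega)
            have hpos : 0 < cntM j s M i := ih2 hI (by omega)
            have e2 : cntM j s' M' i = cntM j s M i - 1 := by
              rw [ih1, if_pos ⟨hI, by omega⟩]
            by_cases hcnd : s i = j ∧ i ∉ M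
            · have hA : cntM j s M (i+1) = cntM j s M i + 1 := by
                rw [cntM_succ, if_pos hcnd]
              have hB : cntM j s' M' (i+1) = cntM j s M i - 1 + 1 := by
                rw [cntM_succ, if_pos ((hcnd_iff i (by omega) (by omega)).mpr hcnd), e2]
              constructor
              · rw [hA, hB, if_pos (by omega)]; omega
              · intro _ _; omega
            · have hA : cntM j s M (i+1) = cntM j s M i := by
                rw [cntM_succ, if_neg hcnd, if_neg (fun hh => hne1 hh.1)]
              have hB : cntM j s' M' (i+1) = cntM j s M i - 1 := by
                rw [cntM_succ, if_neg (fun hh => hcnd ((hcnd_iff i (by omega) (by omega)).mp hh)),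
                  if_neg (by rw [hss]; tauto), e2]
              constructor
              · rw [hA, hB, if_pos (by omega)]
              · intro _ _; omega
          · -- i = q
            have hpos : 0 < cntM j s M i := ih2 hI (by omega)
            have e2 : cntM j s' M' i = cntM j s M i - 1 := by
              rw [ih1, if_pos ⟨hI, by omega⟩]
            have hA : cntM j s M (i+1) = cntM j s M i - 1 := by
              rw [cntM_succ, if_neg (by rw [hJ, hq1]; intro hh; omega),
                if_pos ⟨by rw [hJ]; exact hq1, hpos⟩]
            have hB : cntM j s' M' (i+1) = cntM j s M i - 1 := by
              rw [cntM_succ, if_neg (by rw [hJ]; intro hh; exact hh.2 hqM'),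
                if_neg (by rw [hJ, hs'q]; intro hh; omega), e2]
            constructor
            · rw [hA, hB, if_neg (by omega)]
            · intro _ h2; omega
          · -- q < i
            have hss : s' i = s i := hs'other i (by omega) (by omega)
            have e2 : cntM j s' M' i = cntM j s M i := by
              rw [ih1, if_neg (by omega)]
            by_cases hcnd : s i = j ∧ i ∉ M
            · have hA : cntM j s M (i+1) = cntM j s M i + 1 := by
                rw [cntM_succ, if_pos hcnd]
              have hB : cntM j s' M' (i+1) = cntM j s M i + 1 := by
                rw [cntM_succ, if_pos ((hcnd_iff i (by omega) (by omega)).mpr hcnd), e2]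
              constructor
              · rw [hA, hB, if_neg (by omega)]
              · intro _ _; omega
            · by_cases hdr : s i = 1 ∧ 0 < cntM j s M i
              · have hA : cntM j s M (i+1) = cntM j s M i - 1 := by
                  rw [cntM_succ, if_neg hcnd, if_pos hdr]
                have hB : cntM j s' M' (i+1) = cntM j s M i - 1 := by
                  rw [cntM_succ, if_neg (fun hh => hcnd ((hcnd_iff i (by omega) (by omega)).mp hh)),
                    if_pos (by rw [hss, e2]; exact hdr), e2]
                constructor
                · rw [hA, hB, if_neg (by omega)]
                · intro _ _; omega
              · have hA : cntM j s M (i+1) = cntM j s M i := by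
                  rw [cntM_succ, if_neg hcnd, if_neg hdr]
                have hB : cntM j s' M' (i+1) = cntM j s M i := by
                  rw [cntM_succ, if_neg (fun hh => hcnd ((hcnd_iff i (by omega) (by omega)).mp hh)),
                    if_neg (by rw [hss, e2]; exact hdr), e2]
                constructor
                · rw [hA, hB, if_neg (by omega)]
                · intro _ _; omega
    -- pass equality
    have hpass : passM j s' M' = passM j s M := by
      funext i
      rcases Nat.lt_trichotomy i p with hI | hI | hI
      · have e1 : cntM j s M i = 0 := hc0 i (by omega)
        have e2 : cntM j s' M' i = 0 := by rw [(G i).1, if_neg (by omega), e1]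
        have hL : passM j s' M' i = s i := by
          unfold passM
          rw [if_neg (fun hh => hpmin i hI ((hcnd_iff i (by omega) (by omega)).mp hh)),
            if_neg (by rw [e2]; omega), hs'other i (by omega) (by omega)]
        have hR : passM j s M i = s i := by
          unfold passM
          rw [if_neg (hpmin i hI), if_neg (by rw [e1]; omega)]
        rw [hL, hR]
      · have e2 : cntM j s' M' i = 0 := by
          rw [(G i).1, if_neg (by omega), hc0 i (by omega)]
        have hL : passM j s' M' i = 1 := by
          unfold passM
          rw [if_neg (by rw [hI, hs'p]; intro hh; omega), if_neg (by rw [e2]; omega),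
            hI, hs'p]
        have hR : passM j s M i = 1 := by
          unfold passM
          rw [if_pos (by rw [hI]; exact ⟨hp1, hp2⟩)]
        rw [hL, hR]
      · rcases Nat.lt_trichotomy i q with hJ | hJ | hJ
        · have hne1 : s i ≠ 1 := hqmin i hI hJ
          have hss : s' i = s i := hs'other i (by omega) (by omega)
          by_cases hcnd : s i = j ∧ i ∉ M
          · have hL : passM j s' M' i = 1 := by
              unfold passM
              rw [if_pos ((hcnd_iff i (by omega) (by omega)).mpr hcnd)]
            have hR : passM j s M i = 1 := by
              unfold passM
              rw [if_pos hcnd]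
            rw [hL, hR]
          · have hL : passM j s' M' i = s i := by
              unfold passM
              rw [if_neg (fun hh => hcnd ((hcnd_iff i (by omega) (by omega)).mp hh)),
                if_neg (by rw [hss]; tauto), hss]
            have hR : passM j s M i = s i := by
              unfold passM
              rw [if_neg hcnd, if_neg (by tauto)]
            rw [hL, hR]
        · have hpos : 0 < cntM j s M i := (G i).2 hI (by omega)
          have hL : passM j s' M' i = j := by
            unfold passM
            rw [if_neg (by rw [hJ]; intro hh; exact hh.2 hqM'),
              if_neg (by rw [hJ, hs'q]; intro hh; omega), hJ, hs'q]
          have hR : passM j s M i = j := by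
            unfold passM
            rw [if_neg (by rw [hJ, hq1]; intro hh; omega), if_pos ⟨by rw [hJ]; exact hq1, hpos⟩]
          rw [hL, hR]
        · have hss : s' i = s i := hs'other i (by omega) (by omega)
          have e2 : cntM j s' M' i = cntM j s M i := by
            rw [(G i).1, if_neg (by omega)]
          by_cases hcnd : s i = j ∧ i ∉ M
          · have hL : passM j s' M' i = 1 := by
              unfold passM
              rw [if_pos ((hcnd_iff i (by omega) (by omega)).mpr hcnd)]
            have hR : passM j s M i = 1 := by
              unfold passM
              rw [if_pos hcnd]
            rw [hL, hR]
          · by_cases hdr : s i = 1 ∧ 0 < cntM j s M i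
            · have hL : passM j s' M' i = j := by
                unfold passM
                rw [if_neg (fun hh => hcnd ((hcnd_iff i (by omega) (by omega)).mp hh)),
                  if_pos (by rw [hss, e2]; exact hdr)]
              have hR : passM j s M i = j := by
                unfold passM
                rw [if_neg hcnd, if_pos hdr]
              rw [hL, hR]
            · have hL : passM j s' M' i = s i := by
                unfold passM
                rw [if_neg (fun hh => hcnd ((hcnd_iff i (by omega) (by omega)).mp hh)),
                  if_neg (by rw [hss, e2]; exact hdr), hss]
              have hR : passM j s M i = s i := by
                unfold passM
                rw [if_neg hcnd, if_neg hdr]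
              rw [hL, hR]
    -- drops equality
    have memdrop : ∀ (t : ℕ → ℕ) (Mm : Set ℕ) (k : ℕ),
        k ∈ dropsM j t Mm ↔ (t k = 1 ∧ 0 < cntM j t Mm k) := fun _ _ _ => Iff.rfl
    have hdrops : M' ∪ dropsM j s' M' = M ∪ dropsM j s M := by
      ext i
      simp only [Set.mem_union, memdrop]
      rcases Nat.lt_trichotomy i q with hJ | hJ | hJ
      · have hiq : i ≠ q := by omega
        have hMM : i ∈ M' ↔ i ∈ M := hmem' i hiq
        rcases Nat.lt_trichotomy i p with hI | hI | hI
        · have e1 : cntM j s M i = 0 := hc0 i (by omega)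
          have e2 : cntM j s' M' i = 0 := by rw [(G i).1, if_neg (by omega), e1]
          have hd1 : ¬(s i = 1 ∧ 0 < cntM j s M i) := by rw [e1]; omega
          have hd2 : ¬(s' i = 1 ∧ 0 < cntM j s' M' i) := by rw [e2]; omega
          constructor
          · rintro (h | h)
            · exact Or.inl (hMM.mp h)
            · exact absurd h hd2
          · rintro (h | h)
            · exact Or.inl (hMM.mpr h)
            · exact absurd h hd1
        · have e1 : cntM j s M i = 0 := hc0 i (by omega)
          have e2 : cntM j s' M' i = 0 := by rw [(G i).1, if_neg (by omega), e1]
          have hd1 : ¬(s i = 1 ∧ 0 < cntM j s M i) := by rw [e1]; omega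
          have hd2 : ¬(s' i = 1 ∧ 0 < cntM j s' M' i) := by rw [e2]; omega
          constructor
          · rintro (h | h)
            · exact Or.inl (hMM.mp h)
            · exact absurd h hd2
          · rintro (h | h)
            · exact Or.inl (hMM.mpr h)
            · exact absurd h hd1
        · have hne1 : s i ≠ 1 := hqmin i hI hJ
          have hss : s' i = s i := hs'other i (by omega) (by omega)
          have hd1 : ¬(s i = 1 ∧ 0 < cntM j s M i) := fun hh => hne1 hh.1
          have hd2 : ¬(s' i = 1 ∧ 0 < cntM j s' M' i) := by
            rw [hss]; exact fun hh => hne1 hh.1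
          constructor
          · rintro (h | h)
            · exact Or.inl (hMM.mp h)
            · exact absurd h hd2
          · rintro (h | h)
            · exact Or.inl (hMM.mpr h)
            · exact absurd h hd1
      · have hpos : 0 < cntM j s M i := (G i).2 (by omega) (by omega)
        have hL : i ∈ M' := by rw [hJ]; exact hqM'
        have hd1 : s i = 1 ∧ 0 < cntM j s M i := ⟨by rw [hJ]; exact hq1, hpos⟩
        exact ⟨fun _ => Or.inr hd1, fun _ => Or.inl hL⟩
      · have hiq : i ≠ q := by omega
        have hip : i ≠ p := by omega
        have hMM : i ∈ M' ↔ i ∈ M := hmem' i hiq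
        have hss : s' i = s i := hs'other i hip hiq
        have e2 : cntM j s' M' i = cntM j s M i := by
          rw [(G i).1, if_neg (by omega)]
        have hdd : (s' i = 1 ∧ 0 < cntM j s' M' i) ↔ (s i = 1 ∧ 0 < cntM j s M i) := by
          rw [hss, e2]
        constructor
        · rintro (h | h)
          · exact Or.inl (hMM.mp h)
          · exact Or.inr (hdd.mp h)
        · rintro (h | h)
          · exact Or.inl (hMM.mpr h)
          · exact Or.inr (hdd.mpr h)
    -- assemble
    have hmove : bbsMoveBall j (s, M) = (s', M') := by
      rw [bbsMoveBall_eq ⟨p, hp1, hp2⟩ ⟨q, hq1, (by rw [← hpdef]; exact hq2)⟩]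
    have hU' : {i | s' i = j ∧ i ∉ M'} = {i | s i = j ∧ i ∉ M} \ {p} := by
      ext i
      simp only [Set.mem_setOf_eq, Set.mem_diff, Set.mem_singleton_iff]
      rcases eq_or_ne i p with rfl | hip
      · constructor
        · intro hh; rw [hs'p] at hh; omega
        · intro hh; exact absurd rfl hh.2
      · rcases eq_or_ne i q with rfl | hiq
        · constructor
          · intro hh; exact absurd hqM' hh.2
          · intro hh; rw [hq1] at hh; omega
        · constructor
          · intro hh; exact ⟨(hcnd_iff i hip hiq).mp hh, hip⟩
          · intro hh; exact (hcnd_iff i hip hiq).mpr hh.1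
    have hfin' : {i | s' i ≠ 1}.Finite := by
      apply (hfin.insert q).subset
      intro i hi
      rcases eq_or_ne i q with rfl | hiq
      · simp
      · rcases eq_or_ne i p with rfl | hip
        · exact absurd hs'p hi
        · right
          rw [Set.mem_setOf_eq, ← hs'other i hip hiq]
          exact hi
    have hcard' : {i | s' i = j ∧ i ∉ M'}.ncard = N := by
      rw [hU', Set.ncard_diff_singleton_of_mem hp, hcard]
      omega
    rw [Function.iterate_succ_apply, hmove, ih s' M' hfin' hcard', hpass, hdrops]

/-- The key characterization of one phase of the box-ball move. -/
lemma bbsPhase_eq {j : ℕ} (hj : 2 ≤ j) {s : ℕ → ℕ} {M : Set ℕ}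
    (hfin : {i | s i ≠ 1}.Finite) :
    bbsPhase j (s, M) = (passM j s M, M ∪ dropsM j s M) :=
  phase_aux j hj _ s M hfin rfl

end BBSaux

namespace BBSaux

/-- Applying the passes with labels `J, J-1, …, 2` in order. -/
noncomputable def chA : ℕ → (ℕ → ℕ) → (ℕ → ℕ)
  | 0, u => u
  | 1, u => u
  | (J+2), u => chA (J+1) (passM (J+2) u ∅)

/-- The counter of the pass with label `k` inside `chA J`. -/
noncomputable def ctr : ℕ → (ℕ → ℕ) → ℕ → (ℕ → ℕ)
  | 0, _, _ => fun _ => 0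
  | 1, _, _ => fun _ => 0
  | (J+2), u, k => if k = J+2 then cntM (J+2) u ∅ else ctr (J+1) (passM (J+2) u ∅) k

lemma chA_zero (u) : chA 0 u = u := rfl
lemma chA_one (u) : chA 1 u = u := rfl
lemma chA_step (J u) : chA (J+2) u = chA (J+1) (passM (J+2) u ∅) := rfl
lemma ctr_step (J u k) : ctr (J+2) u k =
    if k = J+2 then cntM (J+2) u ∅ else ctr (J+1) (passM (J+2) u ∅) k := rfl

lemma passM_cases (j : ℕ) (u : ℕ → ℕ) (M : Set ℕ) (i : ℕ) :
    passM j u M i = 1 ∨ passM j u M i = j ∨ passM j u M i = u i := by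
  unfold passM
  split_ifs <;> simp

lemma passM_finite (j : ℕ) (hj : 2 ≤ j) (u : ℕ → ℕ) (M : Set ℕ)
    (hfin : {i | u i ≠ 1}.Finite) : {i | passM j u M i ≠ 1}.Finite :=
  (hfin.union (dropsM_finite j u M hfin hj)).subset (passM_ne_one_subset j u M)

lemma chA_finite (J : ℕ) : ∀ (u : ℕ → ℕ), {i | u i ≠ 1}.Finite →
    {i | chA J u i ≠ 1}.Finite := by
  induction J using Nat.strong_induction_on with
  | _ J ih =>
    match J with
    | 0 => exact fun u hu => hu
    | 1 => exact fun u hu => hu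
    | (J+2) =>
      intro u hu
      rw [chA_step]
      exact ih (J+1) (by omega) _ (passM_finite (J+2) (by omega) u ∅ hu)

lemma chA_bounds (n J : ℕ) (hJ : J ≤ n+1) : ∀ (u : ℕ → ℕ),
    (∀ i, 1 ≤ u i ∧ u i ≤ n+1) → ∀ i, 1 ≤ chA J u i ∧ chA J u i ≤ n+1 := by
  induction J using Nat.strong_induction_on with
  | _ J ih =>
    match J with
    | 0 => exact fun u hu => hu
    | 1 => exact fun u hu => hu
    | (J+2) =>
      intro u hu i
      rw [chA_step]
      refine ih (J+1) (by omega) (by omega) _ (fun k => ?_) i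
      rcases passM_cases (J+2) u ∅ k with h | h | h <;> rw [h]
      · omega
      · omega
      · exact hu k

/-- The main fold lemma: the box-ball evolution equals the composition of passes. -/
lemma bbsT_eq_chA (n : ℕ) (hn : 1 ≤ n) (s : ℕ → ℕ)
    (hfin : {i | s i ≠ 1}.Finite) : bbsT n s = chA (n+1) s := by
  have main : ∀ m, m ≤ n →
      (chA (n+1) s = chA (n+1-m)
        (((List.range m).foldl (fun sm k => bbsPhase (n + 1 - k) sm) (s, (∅ : Set ℕ))).1))
      ∧ (∀ i ∈ ((List.range m).foldl (fun sm k => bbsPhase (n + 1 - k) sm) (s, (∅ : Set ℕ))).2,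
          n+1-m < ((List.range m).foldl (fun sm k => bbsPhase (n + 1 - k) sm) (s, (∅ : Set ℕ))).1 i)
      ∧ {i | ((List.range m).foldl (fun sm k => bbsPhase (n + 1 - k) sm) (s, (∅ : Set ℕ))).1 i ≠ 1}.Finite := by
    intro m
    induction m with
    | zero =>
      intro _
      refine ⟨by simp, ?_, by simpa using hfin⟩
      intro i hi
      simp at hi
    | succ m ihm =>
      intro hm
      obtain ⟨ih1, ih2, ih3⟩ := ihm (by omega)
      set F := ((List.range m).foldl (fun sm k => bbsPhase (n + 1 - k) sm) (s, (∅ : Set ℕ)))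
        with hFdef
      have hstep : (List.range (m+1)).foldl (fun sm k => bbsPhase (n + 1 - k) sm)
          (s, (∅ : Set ℕ)) = bbsPhase (n + 1 - m) F := by
        rw [List.range_succ, List.foldl_append, List.foldl_cons, List.foldl_nil, hFdef]
      have hj : 2 ≤ n + 1 - m := by omega
      have hphase : bbsPhase (n + 1 - m) F =
          (passM (n+1-m) F.1 F.2, F.2 ∪ dropsM (n+1-m) F.1 F.2) := by
        rw [show F = (F.1, F.2) from rfl]
        exact bbsPhase_eq hj ih3
      have hcongM : ∀ i ∈ F.2, F.1 i ≠ n + 1 - m := by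
        intro i hi
        have := ih2 i hi
        omega
      have hpassc : passM (n+1-m) F.1 F.2 = passM (n+1-m) F.1 ∅ := passM_congr hcongM
      have harith : n + 1 - m = (n - (m+1)) + 2 := by omega
      have harith2 : (n - (m+1)) + 1 = n + 1 - (m+1) := by omega
      refine ⟨?_, ?_, ?_⟩
      · rw [hstep, hphase, ih1]
        show chA (n+1-m) F.1 = chA (n+1-(m+1)) (passM (n+1-m) F.1 F.2)
        rw [hpassc, harith, chA_step, harith2]
      · intro i hi
        rw [hstep, hphase] at hi ⊢
        simp only [Set.mem_union] at hi
        rcases hi with hi | hi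
        · have h2 := ih2 i hi
          have hne : F.1 i ≠ n+1-m := by omega
          have hne1 : F.1 i ≠ 1 := by omega
          have hv : passM (n+1-m) F.1 F.2 i = F.1 i := by
            unfold passM
            rw [if_neg (fun hh => hne hh.1), if_neg (fun hh => hne1 hh.1)]
          show n + 1 - (m+1) < passM (n+1-m) F.1 F.2 i
          rw [hv]
          omega
        · have hd : F.1 i = 1 ∧ 0 < cntM (n+1-m) F.1 F.2 i := hi
          have hv : passM (n+1-m) F.1 F.2 i = n+1-m := by
            unfold passM
            rw [if_neg (by rw [hd.1]; intro hh; omega), if_pos hd]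
          show n + 1 - (m+1) < passM (n+1-m) F.1 F.2 i
          rw [hv]
          omega
      · rw [hstep, hphase]
        exact passM_finite (n+1-m) hj F.1 F.2 ih3
  obtain ⟨h1, -, -⟩ := main n le_rfl
  have harith : n + 1 - n = 1 := by omega
  rw [harith, chA_one] at h1
  rw [bbsT]
  exact h1.symm

end BBSaux

namespace BBSaux

lemma chain_main (J : ℕ) : ∀ (u : ℕ → ℕ) (i : ℕ),
    (u i = 1 →
      (chA J u i = 1 ∨ (2 ≤ chA J u i ∧ chA J u i ≤ J ∧ 0 < ctr J u (chA J u i) i))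
      ∧ (∀ k, 2 ≤ k → k ≤ J → 0 < ctr J u k i → k ≤ chA J u i)
      ∧ (∀ k, 2 ≤ k → k ≤ J →
          ctr J u k (i+1) = if k = chA J u i then ctr J u k i - 1 else ctr J u k i))
    ∧ (2 ≤ u i → u i ≤ J →
      (chA J u i = 1 ∨ (2 ≤ chA J u i ∧ chA J u i < u i ∧ 0 < ctr J u (chA J u i) i))
      ∧ (∀ k, 2 ≤ k → k < u i → 0 < ctr J u k i → k ≤ chA J u i)
      ∧ (∀ k, 2 ≤ k → k ≤ J →
          ctr J u k (i+1) = if k = u i then ctr J u k i + 1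
            else if k = chA J u i then ctr J u k i - 1 else ctr J u k i))
    ∧ (J < u i → chA J u i = u i ∧
        (∀ k, 2 ≤ k → k ≤ J → ctr J u k (i+1) = ctr J u k i)) := by
  induction J using Nat.strong_induction_on with
  | _ J ih =>
    match J with
    | 0 =>
      intro u i
      refine ⟨fun hui => ⟨Or.inl hui, fun k hk hk2 _ => by omega, fun k hk hk2 => by omega⟩,
        fun h1 h2 => by omega, fun _ => ⟨rfl, fun k _ _ => rfl⟩⟩
    | 1 =>
      intro u i
      refine ⟨fun hui => ⟨Or.inl hui, fun k hk hk2 _ => by omega, fun k hk hk2 => by omega⟩,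
        fun h1 h2 => by omega, fun _ => ⟨rfl, fun k _ _ => rfl⟩⟩
    | (J+2) =>
      intro u i
      set u' := passM (J+2) u ∅ with hu'def
      have hchA : chA (J+2) u i = chA (J+1) u' i := rfl
      have hctrtop : ctr (J+2) u (J+2) = cntM (J+2) u ∅ := by
        rw [ctr_step, if_pos rfl]
      have hctrlow : ∀ k, k ≠ J + 2 → ctr (J+2) u k = ctr (J+1) u' k := by
        intro k hk
        rw [ctr_step, if_neg hk]
      have IH := ih (J+1) (by omega) u' i
      refine ⟨?_, ?_, ?_⟩
      · -- (A) : u i = 1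
        intro hui
        by_cases hc : 0 < cntM (J+2) u ∅ i
        · -- a ball of label J+2 is dropped here
          have hu'i : u' i = J + 2 := by
            rw [hu'def]
            unfold passM
            rw [if_neg (by rw [hui]; intro hh; omega), if_pos ⟨hui, hc⟩]
          obtain ⟨hCo, hCc⟩ := IH.2.2 (by rw [hu'i]; omega)
          have ho : chA (J+2) u i = J + 2 := by rw [hchA, hCo, hu'i]
          have hcnt1 : cntM (J+2) u ∅ (i+1) = cntM (J+2) u ∅ i - 1 := by
            rw [cntM_succ, if_neg (by rw [hui]; intro hh; omega), if_pos ⟨hui, hc⟩]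
          refine ⟨?_, ?_, ?_⟩
          · right
            rw [ho, hctrtop]
            exact ⟨by omega, le_rfl, hc⟩
          · intro k hk hk2 _
            rw [ho]; omega
          · intro k hk hk2
            rcases eq_or_ne k (J+2) with rfl | hkne
            · rw [hctrtop, hcnt1, if_pos (by rw [ho])]
            · rw [hctrlow k hkne, hCc k hk (by omega),
                if_neg (by rw [ho]; exact hkne)]
        · -- no drop here
          have hu'i : u' i = 1 := by
            rw [hu'def]
            unfold passM
            rw [if_neg (by rw [hui]; intro hh; omega), if_neg (by rw [hui]; tauto), hui]
          obtain ⟨hA1, hA2, hA3⟩ := IH.1 hu'i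
          have hole : chA (J+1) u' i ≤ J + 1 := by
            rcases hA1 with h | h
            · omega
            · omega
          have hcnt1 : cntM (J+2) u ∅ (i+1) = cntM (J+2) u ∅ i := by
            rw [cntM_succ, if_neg (by rw [hui]; intro hh; omega), if_neg (by tauto)]
          refine ⟨?_, ?_, ?_⟩
          · rcases hA1 with h | ⟨h2, h3, h4⟩
            · exact Or.inl (by rw [hchA, h])
            · right
              rw [hchA]
              refine ⟨h2, by omega, ?_⟩
              rw [hctrlow _ (by omega)]
              exact h4
          · intro k hk hk2 hpos
            rcases eq_or_ne k (J+2) with rfl | hkne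
            · rw [hctrtop] at hpos; omega
            · rw [hchA]
              exact hA2 k hk (by omega) (by rw [← hctrlow k hkne]; exact hpos)
          · intro k hk hk2
            rw [hchA]
            rcases eq_or_ne k (J+2) with rfl | hkne
            · rw [hctrtop, hcnt1, if_neg (by omega)]
            · rw [hctrlow k hkne, hA3 k hk (by omega)]
      · -- (B) : 2 ≤ u i ≤ J+2
        intro hx1 hx2
        by_cases hx : u i = J + 2
        · -- the ball here is picked up
          have hu'i : u' i = 1 := by
            rw [hu'def]
            unfold passM
            rw [if_pos ⟨hx, Set.notMem_empty i⟩]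
          obtain ⟨hA1, hA2, hA3⟩ := IH.1 hu'i
          have hcnt1 : cntM (J+2) u ∅ (i+1) = cntM (J+2) u ∅ i + 1 := by
            rw [cntM_succ, if_pos ⟨hx, Set.notMem_empty i⟩]
          refine ⟨?_, ?_, ?_⟩
          · rcases hA1 with h | ⟨h2, h3, h4⟩
            · exact Or.inl (by rw [hchA, h])
            · right
              rw [hchA]
              refine ⟨h2, by omega, ?_⟩
              rw [hctrlow _ (by omega)]
              exact h4
          · intro k hk hk2 hpos
            rw [hchA]
            exact hA2 k hk (by omega) (by rw [← hctrlow k (by omega)]; exact hpos)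
          · intro k hk hk2
            rw [hchA]
            rcases eq_or_ne k (J+2) with rfl | hkne
            · rw [hctrtop, hcnt1, if_pos (by omega)]
            · have hole : chA (J+1) u' i ≤ J + 1 := by
                rcases hA1 with h | h
                · omega
                · omega
              rw [hctrlow k hkne, hA3 k hk (by omega), if_neg (show ¬(k = u i) by omega)]
        · -- the ball here passes through
          have hxle : u i ≤ J + 1 := by omega
          have hu'i : u' i = u i := by
            rw [hu'def]
            unfold passM
            rw [if_neg (by intro hh; exact hx hh.1), if_neg (by intro hh; omega)]
          obtain ⟨hB1, hB2, hB3⟩ := IH.2.1 (by rw [hu'i]; omega) (by rw [hu'i]; omega)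
          rw [hu'i] at hB1 hB2 hB3
          have hcnt1 : cntM (J+2) u ∅ (i+1) = cntM (J+2) u ∅ i := by
            rw [cntM_succ, if_neg (by intro hh; exact hx hh.1), if_neg (by intro hh; omega)]
          refine ⟨?_, ?_, ?_⟩
          · rcases hB1 with h | ⟨h2, h3, h4⟩
            · exact Or.inl (by rw [hchA, h])
            · right
              rw [hchA]
              refine ⟨h2, h3, ?_⟩
              rw [hctrlow _ (by omega)]
              exact h4
          · intro k hk hk2 hpos
            rw [hchA]
            exact hB2 k hk hk2 (by rw [← hctrlow k (by omega)]; exact hpos)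
          · intro k hk hk2
            rw [hchA]
            rcases eq_or_ne k (J+2) with rfl | hkne
            · have hole : chA (J+1) u' i ≤ J + 1 := by
                rcases hB1 with h | h
                · omega
                · omega
              rw [hctrtop, hcnt1, if_neg (by omega), if_neg (by omega)]
            · rw [hctrlow k hkne, hB3 k hk (by omega)]
      · -- (C) : J+2 < u i
        intro hx
        have hu'i : u' i = u i := by
          rw [hu'def]
          unfold passM
          rw [if_neg (by intro hh; omega), if_neg (by intro hh; omega)]
        obtain ⟨hCo, hCc⟩ := IH.2.2 (by rw [hu'i]; omega)
        have hcnt1 : cntM (J+2) u ∅ (i+1) = cntM (J+2) u ∅ i := by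
          rw [cntM_succ, if_neg (by intro hh; omega), if_neg (by intro hh; omega)]
        refine ⟨by rw [hchA, hCo, hu'i], ?_⟩
        intro k hk hk2
        rcases eq_or_ne k (J+2) with rfl | hkne
        · rw [hctrtop, hcnt1]
        · rw [hctrlow k hkne, hCc k hk (by omega)]

end BBSaux

namespace BBSaux

lemma ctr_zero (J : ℕ) : ∀ u k, ctr J u k 0 = 0 := by
  induction J using Nat.strong_induction_on with
  | _ J ih =>
    match J with
    | 0 => intro u k; rfl
    | 1 => intro u k; rfl
    | (J+2) =>
      intro u k
      rw [ctr_step]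
      split_ifs with h
      · rfl
      · exact ih (J+1) (by omega) _ k

/-- The key local identity (conservation law) for one time step. -/
lemma localE (n : ℕ) (u : ℕ → ℕ) (hu : ∀ i, 1 ≤ u i ∧ u i ≤ n+1) (i : ℕ) :
    (if (if i = 0 then 1 else chA (n+1) u (i-1)) < chA (n+1) u i then 1 else 0)
      + (if 2 ≤ u i then 1 else 0)
    = (if (if i = 0 then 1 else u (i-1)) < u i then 1 else 0)
      + (if 2 ≤ (if i = 0 then 1 else u (i-1)) then 1 else 0) := by
  rcases i with _ | m
  · -- i = 0 : the first box of the new state is empty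
    have ht0 : chA (n+1) u 0 = 1 := by
      have P := chain_main (n+1) u 0
      by_cases h1 : u 0 = 1
      · rcases (P.1 h1).1 with h | ⟨_, _, hpos⟩
        · exact h
        · rw [ctr_zero] at hpos; omega
      · rcases (P.2.1 (by have := hu 0; omega) (hu 0).2).1 with h | ⟨_, _, hpos⟩
        · exact h
        · rw [ctr_zero] at hpos; omega
    simp only [if_pos rfl, ht0]
    have hu0 := hu 0
    split_ifs <;> omega
  · -- i = m+1
    simp only [if_neg (Nat.succ_ne_zero m), Nat.add_sub_cancel]
    have Pm := chain_main (n+1) u m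
    have Pm1 := chain_main (n+1) u (m+1)
    have hum := hu m
    have hum1 := hu (m+1)
    have hx'1 : 1 ≤ chA (n+1) u m := by
      by_cases h1 : u m = 1
      · rcases (Pm.1 h1).1 with h | ⟨h2, _, _⟩ <;> omega
      · rcases (Pm.2.1 (by omega) (by omega)).1 with h | ⟨h2, _, _⟩ <;> omega
    by_cases hx1 : u m = 1
    · obtain ⟨hA1, hA2, hA3⟩ := Pm.1 hx1
      have key : ¬(chA (n+1) u m < chA (n+1) u (m+1)) := by
        have hB1 : chA (n+1) u (m+1) = 1 ∨
            (2 ≤ chA (n+1) u (m+1) ∧ chA (n+1) u (m+1) ≤ n+1 ∧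
              0 < ctr (n+1) u (chA (n+1) u (m+1)) (m+1)) := by
          by_cases hy1 : u (m+1) = 1
          · rcases (Pm1.1 hy1).1 with h | ⟨h2, h3, h4⟩
            · exact Or.inl h
            · exact Or.inr ⟨h2, h3, h4⟩
          · rcases (Pm1.2.1 (by omega) (by omega)).1 with h | ⟨h2, h3, h4⟩
            · exact Or.inl h
            · exact Or.inr ⟨h2, by omega, h4⟩
        rcases hB1 with h | ⟨h2, h3, h4⟩
        · omega
        · rcases eq_or_ne (chA (n+1) u (m+1)) (chA (n+1) u m) with he | hne
          · omega
          · have hc := hA3 (chA (n+1) u (m+1)) h2 h3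
            rw [if_neg hne] at hc
            rw [hc] at h4
            have := hA2 (chA (n+1) u (m+1)) h2 h3 h4
            omega
      split_ifs <;> omega
    · have hx2 : 2 ≤ u m := by omega
      obtain ⟨hA1, hA2, hA3⟩ := Pm.2.1 hx2 (by omega)
      have hxlt : chA (n+1) u m < u m := by
        rcases hA1 with h | ⟨_, h3, _⟩ <;> omega
      have hxc : 0 < ctr (n+1) u (u m) (m+1) := by
        rw [hA3 (u m) hx2 (by omega), if_pos rfl]
        omega
      by_cases hy1 : u (m+1) = 1
      · obtain ⟨hB1, hB2, _⟩ := Pm1.1 hy1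
        have key : chA (n+1) u m < chA (n+1) u (m+1) := by
          have := hB2 (u m) hx2 (by omega) hxc
          omega
        split_ifs <;> omega
      · have hy2 : 2 ≤ u (m+1) := by omega
        obtain ⟨hB1, hB2, _⟩ := Pm1.2.1 hy2 (by omega)
        by_cases hxy : u m < u (m+1)
        · have key : chA (n+1) u m < chA (n+1) u (m+1) := by
            have := hB2 (u m) hx2 hxy hxc
            omega
          split_ifs <;> omega
        · have key : ¬(chA (n+1) u m < chA (n+1) u (m+1)) := by
            rcases hB1 with h | ⟨h2, h3, h4⟩
            · omega
            · rcases eq_or_ne (chA (n+1) u (m+1)) (chA (n+1) u m) with he | hne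
              · omega
              · have hc := hA3 (chA (n+1) u (m+1)) h2 (by omega)
                rw [if_neg (by omega), if_neg hne] at hc
                rw [hc] at h4
                have := hA2 (chA (n+1) u (m+1)) h2 (by omega) h4
                omega
          split_ifs <;> omega

/-- Number of "ascents" in the first `m` letters (with a virtual initial `1`). -/
noncomputable def ascN (u : ℕ → ℕ) (m : ℕ) : ℕ :=
  ∑ i ∈ Finset.range m, (if (if i = 0 then 1 else u (i-1)) < u i then 1 else 0)

lemma asc_step (n : ℕ) (u : ℕ → ℕ) (hu : ∀ i, 1 ≤ u i ∧ u i ≤ n+1) :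
    ∀ m, 1 ≤ m →
      ascN u m = ascN (chA (n+1) u) m + (if 2 ≤ u (m-1) then 1 else 0) := by
  intro m
  induction m with
  | zero => omega
  | succ m ihm =>
    intro _
    have h00 : (if (0:ℕ) = 0 then (1:ℕ) else u (0-1)) = 1 := if_pos rfl
    have h01 : (if (0:ℕ) = 0 then (1:ℕ) else chA (n+1) u (0-1)) = 1 := if_pos rfl
    rcases Nat.eq_zero_or_pos m with rfl | hm
    · have E := localE n u hu 0
      rw [h01, h00, if_neg (show ¬(2 ≤ (1:ℕ)) by omega)] at E
      unfold ascN
      rw [Finset.sum_range_one, Finset.sum_range_one, h00, h01, Nat.add_sub_cancel]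
      omega
    · have ih := ihm (by omega)
      have E := localE n u hu m
      have hm0 : ¬(m = 0) := by omega
      rw [if_neg hm0, if_neg hm0] at E
      unfold ascN at ih ⊢
      rw [Finset.sum_range_succ, Finset.sum_range_succ, Nat.add_sub_cancel,
        if_neg hm0, if_neg hm0]
      omega

/-- Prefixes of empty boxes are preserved (balls move strictly right). -/
lemma cntM_prefix (j : ℕ) (hj : 2 ≤ j) (u : ℕ → ℕ) {c : ℕ}
    (hpre : ∀ k, k < c → u k = 1) : ∀ i, i ≤ c → cntM j u ∅ i = 0 :=
  cntM_eq_zero j u ∅ (fun k hk hcnd => by rw [hpre k hk] at hcnd; omega)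

lemma passM_prefix (j : ℕ) (hj : 2 ≤ j) (u : ℕ → ℕ) {c : ℕ}
    (hpre : ∀ k, k < c → u k = 1) : ∀ k, k < c → passM j u ∅ k = 1 := by
  intro k hk
  unfold passM
  rw [if_neg (by rw [hpre k hk]; intro hh; omega),
    if_neg (by rw [cntM_prefix j hj u hpre k (by omega)]; intro hh; omega)]
  exact hpre k hk

lemma chA_prefix (J : ℕ) : ∀ (u : ℕ → ℕ) (c : ℕ), (∀ k, k < c → u k = 1) →
    ∀ k, k < c → chA J u k = 1 := by
  induction J using Nat.strong_induction_on with
  | _ J ih =>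
    match J with
    | 0 => exact fun u c hpre k hk => hpre k hk
    | 1 => exact fun u c hpre k hk => hpre k hk
    | (J+2) =>
      intro u c hpre k hk
      rw [chA_step]
      exact ih (J+1) (by omega) _ c (passM_prefix (J+2) (by omega) u hpre) k hk

lemma ctr_prefix (J : ℕ) : ∀ (u : ℕ → ℕ) (c : ℕ), (∀ k, k < c → u k = 1) →
    ∀ k', ctr J u k' c = 0 := by
  induction J using Nat.strong_induction_on with
  | _ J ih =>
    match J with
    | 0 => intro u c _ k'; rfl
    | 1 => intro u c _ k'; rfl
    | (J+2) =>
      intro u c hpre k'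
      rw [ctr_step]
      split_ifs with h
      · exact cntM_prefix (J+2) (by omega) u hpre c le_rfl
      · exact ih (J+1) (by omega) _ c (passM_prefix (J+2) (by omega) u hpre) k'

lemma vanish (n : ℕ) (u : ℕ → ℕ) (hu : ∀ i, 1 ≤ u i ∧ u i ≤ n+1) (c : ℕ)
    (hpre : ∀ k, k < c → u k = 1) : ∀ k, k < c + 1 → chA (n+1) u k = 1 := by
  intro k hk
  rcases Nat.lt_or_ge k c with hkc | hkc
  · exact chA_prefix (n+1) u c hpre k hkc
  · have hkc' : k = c := by omega
    subst hkc'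
    have P := chain_main (n+1) u k
    have hctr0 : ∀ k', ctr (n+1) u k' k = 0 := ctr_prefix (n+1) u k hpre
    by_cases h1 : u k = 1
    · rcases (P.1 h1).1 with h | ⟨_, _, hpos⟩
      · exact h
      · rw [hctr0] at hpos; omega
    · rcases (P.2.1 (by have := hu k; omega) (hu k).2).1 with h | ⟨_, _, hpos⟩
      · exact h
      · rw [hctr0] at hpos; omega

end BBSaux

namespace BBSaux

lemma iter_inv (n : ℕ) (hn : 1 ≤ n) (u : ℕ → ℕ) (hu : ∀ i, 1 ≤ u i ∧ u i ≤ n+1)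
    (hfin : {i | u i ≠ 1}.Finite) :
    ∀ K, (∀ i, 1 ≤ (bbsT n)^[K] u i ∧ (bbsT n)^[K] u i ≤ n+1) ∧
      {i | (bbsT n)^[K] u i ≠ 1}.Finite := by
  intro K
  induction K with
  | zero => exact ⟨hu, hfin⟩
  | succ K ihK =>
    have hstep : (bbsT n)^[K+1] u = chA (n+1) ((bbsT n)^[K] u) := by
      rw [Function.iterate_succ_apply', bbsT_eq_chA n hn _ ihK.2]
    rw [hstep]
    exact ⟨chA_bounds n (n+1) le_rfl _ ihK.1, chA_finite (n+1) _ ihK.2⟩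

lemma iter_prefix (n : ℕ) (hn : 1 ≤ n) (u : ℕ → ℕ) (hu : ∀ i, 1 ≤ u i ∧ u i ≤ n+1)
    (hfin : {i | u i ≠ 1}.Finite) :
    ∀ K i, i < K → (bbsT n)^[K] u i = 1 := by
  intro K
  induction K with
  | zero => omega
  | succ K ihK =>
    intro i hi
    have hstep : (bbsT n)^[K+1] u = chA (n+1) ((bbsT n)^[K] u) := by
      rw [Function.iterate_succ_apply', bbsT_eq_chA n hn _ (iter_inv n hn u hu hfin K).2]
    rw [hstep]
    exact vanish n _ (iter_inv n hn u hu hfin K).1 K ihK i (by omega)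

lemma telescope (n : ℕ) (hn : 1 ≤ n) (u : ℕ → ℕ) (hu : ∀ i, 1 ≤ u i ∧ u i ≤ n+1)
    (hfin : {i | u i ≠ 1}.Finite) (m : ℕ) (hm : 1 ≤ m) :
    ∀ K, ascN u m = ascN ((bbsT n)^[K] u) m
      + ∑ k ∈ Finset.range K, (if 2 ≤ (bbsT n)^[k] u (m-1) then 1 else 0) := by
  intro K
  induction K with
  | zero => simp
  | succ K ihK =>
    have hstep : (bbsT n)^[K+1] u = chA (n+1) ((bbsT n)^[K] u) := by
      rw [Function.iterate_succ_apply', bbsT_eq_chA n hn _ (iter_inv n hn u hu hfin K).2]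
    have hA := asc_step n ((bbsT n)^[K] u) (iter_inv n hn u hu hfin K).1 m hm
    rw [Finset.sum_range_succ, hstep]
    omega

lemma asc_final (n : ℕ) (hn : 1 ≤ n) (u : ℕ → ℕ) (hu : ∀ i, 1 ≤ u i ∧ u i ≤ n+1)
    (hfin : {i | u i ≠ 1}.Finite) (L m : ℕ) (hm : m ≤ L) :
    ascN ((bbsT n)^[L] u) m = 0 := by
  unfold ascN
  apply Finset.sum_eq_zero
  intro i hi
  have hiL : i < L := by have := Finset.mem_range.mp hi; omega
  have h1 : (bbsT n)^[L] u i = 1 := iter_prefix n hn u hu hfin L i hiL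
  have hprev : (if i = 0 then 1 else (bbsT n)^[L] u (i-1)) = 1 := by
    split_ifs with h
    · rfl
    · exact iter_prefix n hn u hu hfin L (i-1) (by omega)
  rw [hprev, h1]
  simp

lemma Icc_sum_eq (g : ℕ → ℕ) (R : ℕ) :
    ∑ i ∈ Finset.Icc 1 R, g i = ∑ i ∈ Finset.range R, g (i+1) := by
  induction R with
  | zero => simp
  | succ R ih =>
    rw [Finset.sum_range_succ, ← ih, Finset.sum_Icc_succ_top (by omega)]

lemma sum_asc (f : ℕ → ℕ) (L : ℕ) :
    ∑ m ∈ Finset.range L, (∑ i ∈ Finset.range (m+1), f i)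
      = ∑ i ∈ Finset.range L, (L - i) * f i := by
  induction L with
  | zero => simp
  | succ L ihL =>
    rw [Finset.sum_range_succ, ihL]
    rw [Finset.sum_range_succ (f := fun i => (L + 1 - i) * f i),
      Finset.sum_range_succ (f := f)]
    have h1 : ∑ i ∈ Finset.range L, (L + 1 - i) * f i
        = ∑ i ∈ Finset.range L, ((L - i) * f i + f i) := by
      apply Finset.sum_congr rfl
      intro i hi
      have hiL : i < L := Finset.mem_range.mp hi
      have : L + 1 - i = (L - i) + 1 := by omega
      rw [this, add_mul, one_mul]
    rw [h1, Finset.sum_add_distrib]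
    have : L + 1 - L = 1 := by omega
    rw [this, one_mul]
    omega

lemma tau_eq (a : List ℕ) :
    bbsTau a = ∑ i ∈ Finset.range a.length,
      (a.length - i) *
        (if (if i = 0 then 1 else a.getD (i-1) 1) < a.getD i 1 then 1 else 0) := by
  rcases a with _ | ⟨x, t⟩
  · simp [bbsTau]
  · unfold bbsTau
    have hlen : (x :: t).length = t.length + 1 := rfl
    rw [hlen]
    set R := t.length with hR
    rw [Nat.add_sub_cancel, Icc_sum_eq, Finset.sum_range_succ']
    have hhead : (x :: t).headD 0 = x := rfl
    have hget0 : (x :: t).getD 0 1 = x := rfl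
    have h0term : (R + 1 - 0) *
        (if (if (0:ℕ) = 0 then 1 else (x::t).getD (0-1) 1) < (x::t).getD 0 1 then 1 else 0)
        = (R+1) * (if 2 ≤ x then 1 else 0) := by
      rw [if_pos rfl, hget0, Nat.sub_zero]
      congr 1
    have hsum : ∑ i ∈ Finset.range R,
        ((R+1) - (i+1)) * (if (x::t).getD (i+1-1) 0 < (x::t).getD (i+1) 0 then 1 else 0)
        = ∑ i ∈ Finset.range R,
          ((R+1) - (i+1)) *
            (if (if (i+1:ℕ) = 0 then 1 else (x::t).getD (i+1-1) 1) < (x::t).getD (i+1) 1 then 1 else 0) := by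
      apply Finset.sum_congr rfl
      intro i hi
      have hiR : i < R := Finset.mem_range.mp hi
      have hlt1 : i + 1 - 1 < (x::t).length := by rw [hlen]; omega
      have hlt2 : i + 1 < (x::t).length := by rw [hlen]; omega
      have hv1 : (x::t).getD (i+1-1) 0 = (x::t).getD (i+1-1) 1 := by
        rw [List.getD_eq_getElem (x::t) 0 hlt1, List.getD_eq_getElem (x::t) 1 hlt1]
      have hv2 : (x::t).getD (i+1) 0 = (x::t).getD (i+1) 1 := by
        rw [List.getD_eq_getElem (x::t) 0 hlt2, List.getD_eq_getElem (x::t) 1 hlt2]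
      rw [if_neg (Nat.succ_ne_zero i), hv1, hv2]
    rw [hhead, hsum, h0term]
    omega

end BBSaux

theorem tau_eq_number_of_balls
    (n : ℕ) (hn : 1 ≤ n) (a : List ℕ) (ha : ∀ x ∈ a, 1 ≤ x ∧ x ≤ n + 1) :
    bbsTau a =
      ∑ k ∈ Finset.range a.length,
        ((Finset.range a.length).filter
          (fun i => 2 ≤ (bbsT n)^[k] (fun i => a.getD i 1) i)).card := by
  classical
  set w : ℕ → ℕ := fun i => a.getD i 1 with hwdef
  set L := a.length with hL
  have hu : ∀ i, 1 ≤ w i ∧ w i ≤ n + 1 := by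
    intro i
    by_cases h : i < a.length
    · have : w i = a[i] := List.getD_eq_getElem a 1 h
      rw [this]
      exact ha _ (List.getElem_mem h)
    · have : w i = 1 := List.getD_eq_default a 1 (by omega)
      rw [this]
      omega
  have hfin : {i | w i ≠ 1}.Finite := by
    apply (Set.finite_Iio L).subset
    intro i hi
    simp only [Set.mem_setOf_eq] at hi
    by_contra h
    exact hi (List.getD_eq_default a 1 (by simp only [Set.mem_Iio] at h; omega))
  have hstep1 : ∀ k, ((Finset.range L).filter (fun i => 2 ≤ (bbsT n)^[k] w i)).card
      = ∑ i ∈ Finset.range L, (if 2 ≤ (bbsT n)^[k] w i then 1 else 0) := by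
    intro k
    rw [Finset.card_filter]
  calc bbsTau a
      = ∑ i ∈ Finset.range L,
          (L - i) * (if (if i = 0 then 1 else w (i-1)) < w i then 1 else 0) := BBSaux.tau_eq a
    _ = ∑ i ∈ Finset.range L, ∑ j ∈ Finset.range (i+1),
          (if (if j = 0 then 1 else w (j-1)) < w j then 1 else 0) := by
        rw [BBSaux.sum_asc]
    _ = ∑ i ∈ Finset.range L, ∑ k ∈ Finset.range L,
          (if 2 ≤ (bbsT n)^[k] w i then 1 else 0) := by
        apply Finset.sum_congr rfl
        intro i hi
        have hiL : i < L := Finset.mem_range.mp hi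
        have htel := BBSaux.telescope n hn w hu hfin (i+1) (by omega) L
        have hfinal := BBSaux.asc_final n hn w hu hfin L (i+1) (by omega)
        have : BBSaux.ascN w (i+1) = ∑ k ∈ Finset.range L,
            (if 2 ≤ (bbsT n)^[k] w ((i+1)-1) then 1 else 0) := by
          omega
        rw [Nat.add_sub_cancel] at this
        rw [← this]
        rfl
    _ = ∑ k ∈ Finset.range L, ∑ i ∈ Finset.range L,
          (if 2 ≤ (bbsT n)^[k] w i then 1 else 0) := Finset.sum_comm
    _ = ∑ k ∈ Finset.range L,
          ((Finset.range L).filter (fun i => 2 ≤ (bbsT n)^[k] w i)).card := by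
        exact (Finset.sum_congr rfl (fun k _ => (hstep1 k).symm))
end
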